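/- Let (E, ρ) be a q-polymatroid, ⟨·,·⟩ a non-degenerate symmetric bilinear form on E, and define ρ*(V) = dim V + ρ(V^⊥) − ρ(E) for all subspaces V of E, where V^⊥ is the orthogonal of V with respect to the form. Then ρ* is a q-rank function, i.e., (E, ρ*) is a q-polymatroid. -/

import Mathlib

open Module

/-- Unit-increase: for B ≤ A, ρ A ≤ ρ B + (dim A - dim B). -/
lemma qpm_step
    {𝔽 E : Type*} [Field 𝔽] [AddCommGroup E] [Module 𝔽 E]
    [FiniteDimensional 𝔽 E] (ρ : Submodule 𝔽 E → ℚ)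
    (hR1 : ∀ V : Submodule 𝔽 E, 0 ≤ ρ V ∧ ρ V ≤ (finrank 𝔽 V : ℚ))
    (hR3 : ∀ V W : Submodule 𝔽 E, ρ (V ⊔ W) + ρ (V ⊓ W) ≤ ρ V + ρ W)
    {A B : Submodule 𝔽 E} (h : B ≤ A) :
    ρ A ≤ ρ B + (finrank 𝔽 A : ℚ) - (finrank 𝔽 B : ℚ) := by
  obtain ⟨C', hC⟩ := Submodule.exists_isCompl B
  set C : Submodule 𝔽 E := C' ⊓ A with hCdef
  have hsup : B ⊔ C = A := by
    rw [hCdef, ← sup_inf_assoc_of_le C' h, hC.codisjoint.eq_top, top_inf_eq]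
  have hinf : B ⊓ C = ⊥ := by
    rw [eq_bot_iff]
    refine le_trans ?_ hC.disjoint.le_bot
    exact inf_le_inf_left B inf_le_left
  have hfr : (finrank 𝔽 A : ℚ) = (finrank 𝔽 B : ℚ) + (finrank 𝔽 C : ℚ) := by
    have := Submodule.finrank_sup_add_finrank_inf_eq B C
    rw [hsup, hinf, finrank_bot] at this
    exact_mod_cast (by omega : finrank 𝔽 A = finrank 𝔽 B + finrank 𝔽 C)
  have h3 := hR3 B C
  rw [hsup, hinf] at h3
  have hbot : ρ (⊥ : Submodule 𝔽 E) = 0 := by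
    have h1 := (hR1 ⊥).1
    have h2 := (hR1 ⊥).2
    rw [finrank_bot] at h2
    push_cast at h2
    linarith
  have hC1 := (hR1 C).2
  linarith

theorem qpm_dual_is_rank_function
    {𝔽 E : Type*} [Field 𝔽] [Fintype 𝔽] [AddCommGroup E] [Module 𝔽 E]
    [FiniteDimensional 𝔽 E] (ρ : Submodule 𝔽 E → ℚ)
    (hR1 : ∀ V : Submodule 𝔽 E, 0 ≤ ρ V ∧ ρ V ≤ (finrank 𝔽 V : ℚ))
    (hR2 : ∀ V W : Submodule 𝔽 E, V ≤ W → ρ V ≤ ρ W)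
    (hR3 : ∀ V W : Submodule 𝔽 E, ρ (V ⊔ W) + ρ (V ⊓ W) ≤ ρ V + ρ W)
    (B : LinearMap.BilinForm 𝔽 E) (hsymm : B.IsSymm) (hnd : B.Nondegenerate)
    (ρs : Submodule 𝔽 E → ℚ)
    (hρs : ∀ V : Submodule 𝔽 E,
      ρs V = (finrank 𝔽 V : ℚ) + ρ (B.orthogonal V) - ρ (⊤ : Submodule 𝔽 E)) :
    (∀ V : Submodule 𝔽 E, 0 ≤ ρs V ∧ ρs V ≤ (finrank 𝔽 V : ℚ)) ∧
    (∀ V W : Submodule 𝔽 E, V ≤ W → ρs V ≤ ρs W) ∧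
    (∀ V W : Submodule 𝔽 E, ρs (V ⊔ W) + ρs (V ⊓ W) ≤ ρs V + ρs W) := by
  have hrefl : B.IsRefl := hsymm.isRefl
  have hfo : ∀ V : Submodule 𝔽 E,
      (finrank 𝔽 (B.orthogonal V) : ℚ) = (finrank 𝔽 E : ℚ) - (finrank 𝔽 V : ℚ) := by
    intro V
    have := LinearMap.BilinForm.finrank_orthogonal hnd V
    have hle : finrank 𝔽 V ≤ finrank 𝔽 E := Submodule.finrank_le V
    exact_mod_cast (by omega :
      (finrank 𝔽 (B.orthogonal V) : ℤ) = (finrank 𝔽 E : ℤ) - (finrank 𝔽 V : ℤ))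
  have hsupo : ∀ V W : Submodule 𝔽 E,
      B.orthogonal (V ⊔ W) = B.orthogonal V ⊓ B.orthogonal W := by
    intro V W
    apply le_antisymm
    · exact le_inf (B.orthogonal_le le_sup_left) (B.orthogonal_le le_sup_right)
    · intro x hx y hy
      obtain ⟨v, hv, w, hw, rfl⟩ := Submodule.mem_sup.mp hy
      have h1 : B v x = 0 := hx.1 v hv
      have h2 : B w x = 0 := hx.2 w hw
      simp [LinearMap.BilinForm.IsOrtho, h1, h2]
  have hinfo : ∀ V W : Submodule 𝔽 E,
      B.orthogonal (V ⊓ W) = B.orthogonal V ⊔ B.orthogonal W := by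
    intro V W
    have := hsupo (B.orthogonal V) (B.orthogonal W)
    rw [LinearMap.BilinForm.orthogonal_orthogonal hnd hrefl,
      LinearMap.BilinForm.orthogonal_orthogonal hnd hrefl] at this
    rw [← this, LinearMap.BilinForm.orthogonal_orthogonal hnd hrefl]
  refine ⟨?_, ?_, ?_⟩
  · intro V
    rw [hρs V]
    constructor
    · have hstep := qpm_step ρ hR1 hR3 (le_top : B.orthogonal V ≤ ⊤)
      rw [hfo V] at hstep
      have : (finrank 𝔽 (⊤ : Submodule 𝔽 E) : ℚ) = (finrank 𝔽 E : ℚ) := by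
        norm_cast
        exact finrank_top 𝔽 E
      linarith
    · have := hR2 (B.orthogonal V) ⊤ le_top
      linarith
  · intro V W hVW
    rw [hρs V, hρs W]
    have hstep := qpm_step ρ hR1 hR3 (B.orthogonal_le hVW)
    rw [hfo V, hfo W] at hstep
    linarith
  · intro V W
    rw [hρs V, hρs W, hρs (V ⊔ W), hρs (V ⊓ W), hsupo, hinfo]
    have h3 := hR3 (B.orthogonal V) (B.orthogonal W)
    have hfr : (finrank 𝔽 ↥(V ⊔ W) : ℚ) + (finrank 𝔽 ↥(V ⊓ W) : ℚ)
        = (finrank 𝔽 V : ℚ) + (finrank 𝔽 W : ℚ) := by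
      exact_mod_cast Submodule.finrank_sup_add_finrank_inf_eq V W
    linarith
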